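/- Let (x, x₁) be a Mannheim D-pair of type 5 in Minkowski 3-space (x spacelike on a timelike surface S, x₁ spacelike on a spacelike surface S₁, g of x parallel to n₁ of x₁), with x = x₁ + λn₁ for a nonzero constant λ, and θ the spacelike angle between T and T₁ with T = cos θ·T₁ + sin θ·g₁ and ds/ds₁ = (1+λk_{n₁})/cos θ = λτ_{g₁}/sin θ. Then τ_{g₁}' = (1/λ)·[ (((1+λk_{n₁})² + λ²τ_{g₁}²)/(1+λk_{n₁})) · ( -k_n·(1+λk_{n₁})/cos θ - k_{g₁} ) + λ²τ_{g₁}k_{n₁}'/(1+λk_{n₁}) ], with primes denoting d/ds₁. -/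

import Mathlib

noncomputable section

open Real

/-- Minkowski inner product on ℝ³: ⟨u,v⟩ = -u₁v₁ + u₂v₂ + u₃v₃. -/
def mink (u v : Fin 3 → ℝ) : ℝ := -(u 0 * v 0) + u 1 * v 1 + u 2 * v 2

/-- Lorentzian cross product on Minkowski 3-space. -/
def lcross (u v : Fin 3 → ℝ) : Fin 3 → ℝ :=
  ![u 1 * v 2 - u 2 * v 1, u 0 * v 2 - u 2 * v 0, u 1 * v 0 - u 0 * v 1]

/-- Theorem 4.1 (iii): the characterization ODE for a Mannheim D-pair of type 5
(spacelike angle θ, tan θ = λτ_{g₁}/(1+λk_{n₁})). -/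
theorem mannheim_type5_characterization
    (T T₁ g₁ : ℝ → Fin 3 → ℝ)
    (kn₁ τg₁ kg₁ kn θ σ : ℝ → ℝ) (lam : ℝ) (hlam : lam ≠ 0)
    (hdk : Differentiable ℝ kn₁) (hdτ : Differentiable ℝ τg₁) (hdθ : Differentiable ℝ θ)
    (hne : ∀ t, 1 + lam * kn₁ t ≠ 0)
    (hcos : ∀ t, Real.cos (θ t) ≠ 0)
    (hT : ∀ t, T t = Real.cos (θ t) • T₁ t + Real.sin (θ t) • g₁ t)
    (htan : ∀ t, Real.tan (θ t) = lam * τg₁ t / (1 + lam * kn₁ t))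
    (hθ' : ∀ t, deriv θ t = -(kn t) * σ t - kg₁ t)
    (hσ1 : ∀ t, σ t = (1 + lam * kn₁ t) / Real.cos (θ t))
    (hσ2 : ∀ t, σ t = lam * τg₁ t / Real.sin (θ t)) :
    ∀ t, deriv τg₁ t =
      (1 / lam) * ((((1 + lam * kn₁ t) ^ 2 + lam ^ 2 * (τg₁ t) ^ 2) / (1 + lam * kn₁ t)) *
          (-(kn t) * (1 + lam * kn₁ t) / Real.cos (θ t) - kg₁ t)
        + lam ^ 2 * τg₁ t * deriv kn₁ t / (1 + lam * kn₁ t)) := by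

  intro t
  have hc := hcos t
  have hk := hne t
  have htanD : HasDerivAt (fun s => Real.tan (θ s)) (1 / Real.cos (θ t) ^ 2 * deriv θ t) t :=
    (Real.hasDerivAt_tan hc).comp t (hdθ t).hasDerivAt
  have hnum : HasDerivAt (fun s => lam * τg₁ s) (lam * deriv τg₁ t) t :=
    ((hdτ t).hasDerivAt).const_mul lam
  have hden : HasDerivAt (fun s => 1 + lam * kn₁ s) (lam * deriv kn₁ t) t :=
    (((hdk t).hasDerivAt).const_mul lam).const_add 1
  have hq : HasDerivAt (fun s => lam * τg₁ s / (1 + lam * kn₁ s))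
      ((lam * deriv τg₁ t * (1 + lam * kn₁ t) - lam * τg₁ t * (lam * deriv kn₁ t)) / (1 + lam * kn₁ t) ^ 2) t :=
    hnum.div hden hk
  have hfun : (fun s => Real.tan (θ s)) = fun s => lam * τg₁ s / (1 + lam * kn₁ s) :=
    funext htan
  rw [← hfun] at hq
  have hE := htanD.unique hq
  have hsc : Real.sin (θ t) * (1 + lam * kn₁ t) = lam * τg₁ t * Real.cos (θ t) := by
    have h := htan t
    rw [Real.tan_eq_sin_div_cos] at h
    field_simp at h
    linarith
  have hpyth := Real.sin_sq_add_cos_sq (θ t)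
  have key : (1 + lam * kn₁ t) ^ 2
      = Real.cos (θ t) ^ 2 * ((1 + lam * kn₁ t) ^ 2 + lam ^ 2 * (τg₁ t) ^ 2) := by
    linear_combination (Real.sin (θ t) * (1 + lam * kn₁ t) + lam * τg₁ t * Real.cos (θ t)) * hsc
      - (1 + lam * kn₁ t) ^ 2 * hpyth
  have hθ'' : -(kn t) * (1 + lam * kn₁ t) / Real.cos (θ t) - kg₁ t = deriv θ t := by
    rw [hθ' t, hσ1 t]; ring
  rw [hθ'']
  field_simp at hE
  have main : deriv θ t * ((1 + lam * kn₁ t) ^ 2 + lam ^ 2 * (τg₁ t) ^ 2)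
      = lam * deriv τg₁ t * (1 + lam * kn₁ t) - lam ^ 2 * τg₁ t * deriv kn₁ t := by
    have h2 : (deriv θ t * ((1 + lam * kn₁ t) ^ 2 + lam ^ 2 * (τg₁ t) ^ 2)) * Real.cos (θ t) ^ 2
        = (lam * deriv τg₁ t * (1 + lam * kn₁ t) - lam ^ 2 * τg₁ t * deriv kn₁ t)
          * Real.cos (θ t) ^ 2 := by
      linear_combination hE - deriv θ t * key
    exact mul_right_cancel₀ (pow_ne_zero 2 hc) h2
  field_simp
  linear_combination -main
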